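/- Let G be a totally ordered abelian group, B = ⊕_{i∈G} Bᵢ a G-graded integral domain of characteristic zero, and deg : B → G ∪ {−∞} the degree function determined by the grading. Assume that B is finitely generated as a B₀-algebra, and let A be a subring of B₀ such that the transcendence degree of B₀ over A is finite. Then deg is tame over A. More precisely, given any z₁, …, z_m ∈ B₀ and homogeneous x₁, …, x_n ∈ B such that B₀ is algebraic over A[z₁, …, z_m] and B = B₀[x₁, …, x_n], for every A-derivation D : B → B, deg(D) is defined and deg(D) = max{δ_D(z₁), …, δ_D(z_m), δ_D(x₁), …, δ_D(x_n)}. -/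

import Mathlib

section DegreePrelude

variable {B : Type*} [CommRing B] {G : Type*} [AddCommGroup G] [LinearOrder G] [IsOrderedAddMonoid G]

/-- A degree function on `B` with values in `G ∪ {-∞}` -/
def IsDegreeFunction (deg : B → WithBot G) : Prop :=
  (∀ x : B, deg x = ⊥ ↔ x = 0) ∧
  (∀ x y : B, deg (x * y) = deg x + deg y) ∧
  (∀ x y : B, deg (x + y) ≤ max (deg x) (deg y))

/-- `degDelta deg D x = deg (D x) - deg x` (with value `-∞` if `D x = 0`). -/
noncomputable def degDelta (deg : B → WithBot G) (D : B → B) (x : B) : WithBot G :=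
  (deg (D x)).map fun a => a - (deg x).unbotD 0

/-- The set `{deg (D x) - deg x : x ∈ B \ {0}}`. -/
def degDeltaSet (deg : B → WithBot G) (D : B → B) : Set (WithBot G) :=
  {m | ∃ x : B, x ≠ 0 ∧ degDelta deg D x = m}

/-- `deg (D)` is defined, i.e. the set `{deg (D x) - deg x : x ≠ 0}` has a
greatest element in `G ∪ {-∞}`. -/
def DegreeDefinedAt (deg : B → WithBot G) (D : B → B) : Prop :=
  ∃ M, IsGreatest (degDeltaSet deg D) M

end DegreePrelude


open Polynomial DirectSum

theorem Dsum_eq {B : Type*} [CommRing B] {ι : Type*}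
    (D : B → B) (hD0 : D 0 = 0) (hDadd : ∀ u v, D (u + v) = D u + D v)
    (s : Finset ι) (f : ι → B) :
    D (∑ i ∈ s, f i) = ∑ i ∈ s, D (f i) := by
  induction s using Finset.cons_induction with
  | empty => simpa using hD0
  | cons a s ha ih => rw [Finset.sum_cons, Finset.sum_cons, hDadd, ih]

theorem degSum_le {B : Type*} [CommRing B] {G : Type*} [AddCommGroup G] [LinearOrder G] [IsOrderedAddMonoid G]
    {ι : Type*} (deg : B → WithBot G) (deg0 : deg 0 = ⊥)
    (degadd : ∀ x y : B, deg (x + y) ≤ max (deg x) (deg y))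
    (s : Finset ι) (f : ι → B) :
    deg (∑ i ∈ s, f i) ≤ s.sup fun i => deg (f i) := by
  induction s using Finset.cons_induction with
  | empty => simp [deg0]
  | cons a s ha ih =>
    rw [Finset.sum_cons, Finset.sup_cons]
    exact le_trans (degadd _ _) (sup_le_sup le_rfl ih)

theorem coreBound {B G : Type*} [CommRing B] [IsDomain B] [CharZero B]
    [AddCommGroup G] [LinearOrder G] [IsOrderedAddMonoid G] [DecidableEq G]
    (𝒜 : G → AddSubgroup B) [GradedRing 𝒜]
    (deg : B → WithBot G)
    (degbot : ∀ x : B, deg x = ⊥ ↔ x = 0)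
    (degmul : ∀ x y : B, deg (x * y) = deg x + deg y)
    (degadd : ∀ x y : B, deg (x + y) ≤ max (deg x) (deg y))
    (hdeg : ∀ x : B, x ≠ 0 → ∀ i : G,
      (deg x ≤ ↑i ↔ ∀ j : G, i < j → (DirectSum.decompose 𝒜 x j : B) = 0))
    (A : Subring B) (hA : (A : Set B) ⊆ (𝒜 0 : Set B))
    (Z X : Set B) (hZ : Z ⊆ (𝒜 0 : Set B)) (hX : ∀ x ∈ X, ∃ d, x ∈ 𝒜 d)
    (halg : ∀ b ∈ 𝒜 0, ∃ p : Polynomial B, p ≠ 0 ∧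
        (∀ i : ℕ, p.coeff i ∈ Subring.closure ((A : Set B) ∪ Z)) ∧
        Polynomial.eval b p = 0)
    (hgen : Subring.closure ((𝒜 0 : Set B) ∪ X) = ⊤)
    (D : B → B) (hDadd : ∀ u v, D (u + v) = D u + D v)
    (hDmul : ∀ u v, D (u * v) = u * D v + v * D u)
    (hDA : ∀ a ∈ A, D a = 0)
    (M : WithBot G) (hMZ : ∀ s ∈ Z, deg (D s) ≤ M)
    (hMX : ∀ s ∈ X, deg (D s) ≤ M + deg s) :
    ∀ b : B, deg (D b) ≤ M + deg b := by
  classical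
  have deg0 : deg 0 = ⊥ := (degbot 0).2 rfl
  have hD0 : D 0 = 0 := by
    have h := hDadd 0 0
    rw [add_zero] at h
    exact add_left_cancel (h.symm.trans (add_zero (D 0)).symm)
  have hD1 : D 1 = 0 := by
    have h := hDmul 1 1
    simp only [mul_one, one_mul] at h
    exact add_left_cancel (h.symm.trans (add_zero (D 1)).symm)
  have hDneg : ∀ u, D (-u) = -D u := by
    intro u
    have h := hDadd u (-u)
    rw [add_neg_cancel, hD0] at h
    exact (neg_eq_of_add_eq_zero_right h.symm).symm
  have degne : ∀ {x : B}, x ≠ 0 → ∃ g : G, deg x = ↑g := by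
    intro x hx
    obtain ⟨g, hg⟩ := WithBot.ne_bot_iff_exists.mp (fun h => hx ((degbot x).1 h))
    exact ⟨g, hg.symm⟩
  have deg_of_mem_le : ∀ {i : G} {x : B}, x ∈ 𝒜 i → deg x ≤ (i : WithBot G) := by
    intro i x hx
    by_cases h : x = 0
    · simp [h, deg0]
    · exact (hdeg x h i).2 fun j hj =>
        DirectSum.decompose_of_mem_ne 𝒜 hx (ne_of_lt hj)
  have deg_of_mem : ∀ {i : G} {x : B}, x ∈ 𝒜 i → x ≠ 0 → deg x = (i : WithBot G) := by
    intro i x hx h0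
    refine le_antisymm (deg_of_mem_le hx) ?_
    by_contra hlt
    push_neg at hlt
    obtain ⟨g, hg⟩ := degne h0
    rw [hg] at hlt
    have hgi : g < i := WithBot.coe_lt_coe.mp hlt
    have := (hdeg x h0 g).1 (le_of_eq hg) i hgi
    rw [DirectSum.decompose_of_mem_same 𝒜 hx] at this
    exact h0 this
  have deg_neg : ∀ x : B, deg (-x) = deg x := by
    intro x
    have hm1 : (-1 : B) ∈ 𝒜 0 := (𝒜 0).neg_mem (SetLike.one_mem_graded 𝒜)
    have : deg (-1 : B) = ((0 : G) : WithBot G) :=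
      deg_of_mem hm1 (neg_ne_zero.mpr one_ne_zero)
    rw [← neg_one_mul, degmul, this, WithBot.coe_zero, zero_add]
  have mem0mul : ∀ {u v : B}, u ∈ 𝒜 0 → v ∈ 𝒜 0 → u * v ∈ 𝒜 0 := by
    intro u v hu hv
    have := SetLike.mul_mem_graded hu hv
    rwa [add_zero] at this
  have mem0pow : ∀ {u : B}, u ∈ 𝒜 0 → ∀ n : ℕ, u ^ n ∈ 𝒜 0 := by
    intro u hu n
    induction n with
    | zero => simpa using SetLike.one_mem_graded 𝒜
    | succ n ih => rw [pow_succ]; exact mem0mul ih hu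
  have degle0 : ∀ {u : B}, u ∈ 𝒜 0 → deg u ≤ 0 := by
    intro u hu
    simpa using deg_of_mem_le hu
  set R : Subring B := Subring.closure ((A : Set B) ∪ Z) with hRdef
  have hR0 : ∀ r ∈ R, r ∈ 𝒜 0 := by
    intro r hr
    induction hr using Subring.closure_induction with
    | mem s hs => rcases hs with hs | hs; exacts [hA hs, hZ hs]
    | zero => exact (𝒜 0).zero_mem
    | one => exact SetLike.one_mem_graded 𝒜
    | add x y _ _ px py => exact (𝒜 0).add_mem px py
    | neg x _ px => exact (𝒜 0).neg_mem px
    | mul x y _ _ px py => exact mem0mul px py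
  have hDR : ∀ r ∈ R, deg (D r) ≤ M := by
    intro r hr
    induction hr using Subring.closure_induction with
    | mem s hs =>
      rcases hs with hs | hs
      · rw [hDA s hs, deg0]; exact bot_le
      · exact hMZ s hs
    | zero => rw [hD0, deg0]; exact bot_le
    | one => rw [hD1, deg0]; exact bot_le
    | add x y _ _ px py =>
      rw [hDadd]
      exact le_trans (degadd _ _) (max_le px py)
    | neg x _ px => rw [hDneg, deg_neg]; exact px
    | mul x y hx hy px py =>
      rw [hDmul]
      refine le_trans (degadd _ _) (max_le ?_ ?_)
      · rw [degmul]
        calc deg x + deg (D y) ≤ 0 + M := add_le_add (degle0 (hR0 x hx)) py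
          _ = M := zero_add M
      · rw [degmul]
        calc deg y + deg (D x) ≤ 0 + M := add_le_add (degle0 (hR0 y hy)) px
          _ = M := zero_add M
  -- Leibniz for powers
  have hDpow : ∀ (c : B) (n : ℕ), D (c ^ n) = (n : B) * c ^ (n - 1) * D c := by
    intro c n
    induction n with
    | zero => simp [hD1]
    | succ n ih =>
      rw [pow_succ, hDmul, ih]
      cases n with
      | zero => simp
      | succ k =>
        have h1 : (k + 1) - 1 = k := rfl
        have h2 : (k + 1 + 1) - 1 = k + 1 := rfl
        rw [h1, h2]
        push_cast
        ring
  -- D of polynomial evaluation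
  have evalD : ∀ (c : B) (p : B[X]),
      D (p.eval c) = (Polynomial.derivative p).eval c * D c
        + p.sum fun i a => c ^ i * D a := by
    intro c p
    induction p using Polynomial.induction_on' with
    | add p q hp hq =>
      rw [eval_add, hDadd, hp, hq, derivative_add, eval_add,
        Polynomial.sum_add_index p q _ (fun i => by rw [hD0, mul_zero])
          (fun a b₁ b₂ => by rw [hDadd, mul_add])]
      ring
    | monomial n a =>
      rw [eval_monomial, hDmul, hDpow, derivative_monomial, eval_monomial,
        Polynomial.sum_monomial_index a _ (by rw [hD0, mul_zero])]
      push_cast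
      ring
  have hevalmem : ∀ c ∈ 𝒜 0, ∀ p : B[X], (∀ i, p.coeff i ∈ 𝒜 0) →
      p.eval c ∈ 𝒜 0 := by
    intro c hc p hp
    rw [Polynomial.eval_eq_sum_range]
    exact AddSubgroup.sum_mem _ fun i _ => mem0mul (hp i) (mem0pow hc i)
  -- Step 2 : bound on B₀
  have hstep2 : ∀ c ∈ 𝒜 0, deg (D c) ≤ M := by
    intro c hc
    obtain ⟨p, hp0, hpc, hpe⟩ := halg c hc
    have key : ∀ N : ℕ, ∀ p : B[X], p.natDegree ≤ N → p ≠ 0 →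
        (∀ i, p.coeff i ∈ R) → p.eval c = 0 → deg (D c) ≤ M := by
      intro N
      induction N with
      | zero =>
        intro p hpd hp0 _ hpe
        exfalso
        have hp : p = Polynomial.C (p.coeff 0) :=
          Polynomial.eq_C_of_natDegree_eq_zero (Nat.le_zero.mp hpd)
        rw [hp, eval_C] at hpe
        rw [hp, hpe, map_zero] at hp0
        exact hp0 rfl
      | succ N ih =>
        intro p hpd hp0 hpcoef hpe
        by_cases hd0 : p.natDegree = 0
        · exfalso
          have hp : p = Polynomial.C (p.coeff 0) :=
            Polynomial.eq_C_of_natDegree_eq_zero hd0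
          rw [hp, eval_C] at hpe
          rw [hp, hpe, map_zero] at hp0
          exact hp0 rfl
        · set p' := Polynomial.derivative p with hp'def
          have hp'coef : ∀ i, p'.coeff i ∈ R := by
            intro i
            rw [hp'def, Polynomial.coeff_derivative]
            refine R.mul_mem (hpcoef _) ?_
            have : ((i + 1 : ℕ) : B) ∈ R := natCast_mem R (i + 1)
            push_cast at this
            exact this
          by_cases hever : p'.eval c = 0
          · have hp'0 : p' ≠ 0 := by
              intro h
              have h1 : p.coeff p.natDegree ≠ 0 := by
                rw [Polynomial.coeff_natDegree]
                exact Polynomial.leadingCoeff_ne_zero.mpr hp0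
              have hnd : p.natDegree - 1 + 1 = p.natDegree :=
                Nat.succ_pred_eq_of_pos (Nat.pos_of_ne_zero hd0)
              have h2 : p'.coeff (p.natDegree - 1) =
                  p.coeff p.natDegree * (((p.natDegree - 1 : ℕ) : B) + 1) := by
                rw [hp'def, Polynomial.coeff_derivative, hnd]
              have h3 : p'.coeff (p.natDegree - 1) ≠ 0 := by
                rw [h2]
                refine mul_ne_zero h1 ?_
                have h4 : ((p.natDegree - 1 + 1 : ℕ) : B) ≠ 0 :=
                  Nat.cast_ne_zero.mpr (Nat.succ_ne_zero _)
                push_cast at h4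
                exact h4
              rw [h, Polynomial.coeff_zero] at h3
              exact h3 rfl
            exact ih p' (Nat.lt_succ_iff.mp
              (lt_of_lt_of_le (Polynomial.natDegree_derivative_lt hd0) hpd))
              hp'0 hp'coef hever
          · have heq := evalD c p
            rw [hpe, hD0] at heq
            have heq2 : p'.eval c * D c = -(p.sum fun i a => c ^ i * D a) :=
              eq_neg_of_add_eq_zero_left heq.symm
            have hsum : deg (p.sum fun i a => c ^ i * D a) ≤ M := by
              rw [Polynomial.sum_def]
              refine le_trans (degSum_le deg deg0 degadd _ _) (Finset.sup_le fun i _ => ?_)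
              rw [degmul]
              calc deg (c ^ i) + deg (D (p.coeff i)) ≤ 0 + M :=
                    add_le_add (degle0 (mem0pow hc i)) (hDR _ (hpcoef i))
                _ = M := zero_add M
            have hmem : p'.eval c ∈ 𝒜 0 :=
              hevalmem c hc p' fun i => hR0 _ (hp'coef i)
            have hdegp' : deg (p'.eval c) = ((0 : G) : WithBot G) :=
              deg_of_mem hmem hever
            calc deg (D c) = deg (p'.eval c * D c) := by
                  rw [degmul, hdegp', WithBot.coe_zero, zero_add]
              _ = deg (-(p.sum fun i a => c ^ i * D a)) := by rw [heq2]
              _ = deg (p.sum fun i a => c ^ i * D a) := deg_neg _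
              _ ≤ M := hsum
    exact key p.natDegree p le_rfl hp0 hpc hpe
  -- multiplication helper
  have hMadd : ∀ {g g' : G} {u v : B}, u ∈ 𝒜 g → deg (D v) ≤ M + (g' : WithBot G) →
      deg (u * D v) ≤ M + ((g + g' : G) : WithBot G) := by
    intro g g' u v hu hv
    rw [degmul]
    calc deg u + deg (D v) ≤ (g : WithBot G) + (M + (g' : WithBot G)) :=
          add_le_add (deg_of_mem_le hu) hv
      _ = M + ((g + g' : G) : WithBot G) := by
          rw [WithBot.coe_add]
          abel
  -- the set of good homogeneous elements
  set S : Set B := {s | ∃ g : G, s ∈ 𝒜 g ∧ deg (D s) ≤ M + (g : WithBot G)}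
    with hSdef
  have hSmul : ∀ {s t : B}, s ∈ S → t ∈ S → s * t ∈ S := by
    rintro s t ⟨g, hg, hs⟩ ⟨g', hg', ht⟩
    refine ⟨g + g', SetLike.mul_mem_graded hg hg', ?_⟩
    rw [hDmul]
    refine le_trans (degadd _ _) (max_le (hMadd hg ht) ?_)
    rw [add_comm g g']
    exact hMadd hg' hs
  have h1S : (1 : B) ∈ S :=
    ⟨0, SetLike.one_mem_graded 𝒜, by rw [hD1, deg0]; exact bot_le⟩
  have hB0S : ∀ c ∈ 𝒜 0, c ∈ S := by
    intro c hc
    exact ⟨0, hc, by rw [WithBot.coe_zero, add_zero]; exact hstep2 c hc⟩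
  have hXS : ∀ s ∈ X, s ∈ S := by
    intro s hs
    obtain ⟨d, hd⟩ := hX s hs
    by_cases h0 : s = 0
    · exact ⟨d, hd, by rw [h0, hD0, deg0]; exact bot_le⟩
    · refine ⟨d, hd, ?_⟩
      have := hMX s hs
      rwa [deg_of_mem hd h0] at this
  have hmulclos : ∀ u ∈ AddSubgroup.closure S, ∀ v ∈ AddSubgroup.closure S,
      u * v ∈ AddSubgroup.closure S := by
    intro u hu
    induction hu using AddSubgroup.closure_induction with
    | mem s hs =>
      intro v hv
      induction hv using AddSubgroup.closure_induction with
      | mem t ht => exact AddSubgroup.subset_closure (hSmul hs ht)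
      | zero => rw [mul_zero]; exact zero_mem _
      | add a b _ _ pa pb => rw [mul_add]; exact add_mem pa pb
      | neg a _ pa => rw [mul_neg]; exact neg_mem pa
    | zero => intro v _; rw [zero_mul]; exact zero_mem _
    | add a b _ _ pa pb =>
      intro v hv
      rw [add_mul]
      exact add_mem (pa v hv) (pb v hv)
    | neg a _ pa =>
      intro v hv
      rw [neg_mul]
      exact neg_mem (pa v hv)
  have hclos : ∀ b : B, b ∈ AddSubgroup.closure S := by
    intro b
    have hb : b ∈ Subring.closure ((𝒜 0 : Set B) ∪ X) := by
      rw [hgen]; exact Subring.mem_top b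
    induction hb using Subring.closure_induction with
    | mem s hs =>
      rcases hs with hs | hs
      · exact AddSubgroup.subset_closure (hB0S s hs)
      · exact AddSubgroup.subset_closure (hXS s hs)
    | zero => exact zero_mem _
    | one => exact AddSubgroup.subset_closure h1S
    | add x y _ _ px py => exact add_mem px py
    | neg x _ px => exact neg_mem px
    | mul x y _ _ px py => exact hmulclos x px y py
  have hGood : ∀ b : B, ∀ d : G,
      deg (D ((DirectSum.decompose 𝒜 b d : 𝒜 d) : B)) ≤ M + (d : WithBot G) := by
    intro b
    induction hclos b using AddSubgroup.closure_induction with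
    | mem s hs =>
      obtain ⟨g, hg, hsb⟩ := hs
      intro d
      by_cases hdg : d = g
      · subst hdg
        rw [DirectSum.decompose_of_mem_same 𝒜 hg]
        exact hsb
      · rw [DirectSum.decompose_of_mem_ne 𝒜 hg (Ne.symm hdg), hD0, deg0]
        exact bot_le
    | zero =>
      intro d
      rw [DirectSum.decompose_zero]
      simp only [DirectSum.zero_apply, ZeroMemClass.coe_zero, hD0, deg0]
      exact bot_le
    | add a b _ _ pa pb =>
      intro d
      rw [DirectSum.decompose_add]
      simp only [DirectSum.add_apply, AddSubgroup.coe_add]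
      rw [hDadd]
      exact le_trans (degadd _ _) (max_le (pa d) (pb d))
    | neg a _ pa =>
      intro d
      have h1 : ((DirectSum.decompose 𝒜 (-a) d : 𝒜 d) : B)
          = -((DirectSum.decompose 𝒜 a d : 𝒜 d) : B) := by
        rw [DirectSum.decompose_neg]
        rfl
      rw [h1, hDneg, deg_neg]
      exact pa d
  -- final assembly
  intro b
  by_cases hb : b = 0
  · rw [hb, hD0, deg0]; exact bot_le
  · obtain ⟨g0, hg0⟩ := degne hb
    have hsupp : ∀ d ∈ (DirectSum.decompose 𝒜 b).support,
        ((d : WithBot G) ≤ deg b) := by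
      intro d hd
      rw [hg0, WithBot.coe_le_coe]
      by_contra hlt
      push_neg at hlt
      have h1 := (hdeg b hb g0).1 (le_of_eq hg0) d hlt
      have h2 : DirectSum.decompose 𝒜 b d ≠ 0 := DFinsupp.mem_support_iff.mp hd
      exact h2 (by
        ext
        exact h1)
    calc deg (D b)
        = deg (D (∑ d ∈ (DirectSum.decompose 𝒜 b).support,
            ((DirectSum.decompose 𝒜 b d : 𝒜 d) : B))) := by
          rw [DirectSum.sum_support_decompose 𝒜 b]
      _ = deg (∑ d ∈ (DirectSum.decompose 𝒜 b).support,
            D ((DirectSum.decompose 𝒜 b d : 𝒜 d) : B)) := by rw [Dsum_eq D hD0 hDadd]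
      _ ≤ (DirectSum.decompose 𝒜 b).support.sup
            (fun d => deg (D ((DirectSum.decompose 𝒜 b d : 𝒜 d) : B))) :=
          degSum_le deg deg0 degadd _ _
      _ ≤ M + deg b := Finset.sup_le fun d hd =>
          le_trans (hGood b d) (add_le_add_right (hsupp d hd) M)


theorem deltaLe_iff {B : Type*} [CommRing B] {G : Type*} [AddCommGroup G] [LinearOrder G] [IsOrderedAddMonoid G]
    (deg : B → WithBot G) (degbot : ∀ x : B, deg x = ⊥ ↔ x = 0)
    (D : B → B) {b : B} (hb : b ≠ 0) (m : WithBot G) :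
    degDelta deg D b ≤ m ↔ deg (D b) ≤ m + deg b := by
  obtain ⟨g, hg⟩ : ∃ g : G, deg b = ↑g := by
    obtain ⟨g, hg⟩ := WithBot.ne_bot_iff_exists.mp (fun h => hb ((degbot b).1 h))
    exact ⟨g, hg.symm⟩
  rw [degDelta, hg, WithBot.unbotD_coe]
  by_cases hdb : deg (D b) = ⊥
  · rw [hdb]
    simp
  · obtain ⟨w, hw⟩ := WithBot.ne_bot_iff_exists.mp hdb
    rw [← hw, WithBot.map_coe]
    induction m using WithBot.recBotCoe with
    | bot => simp [WithBot.bot_add]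
    | coe m0 =>
      rw [← WithBot.coe_add, WithBot.coe_le_coe, WithBot.coe_le_coe,
        sub_le_iff_le_add]

theorem stmt11 {B G : Type*} [CommRing B] [IsDomain B] [CharZero B]
    [AddCommGroup G] [LinearOrder G] [IsOrderedAddMonoid G] [DecidableEq G]
    (𝒜 : G → AddSubgroup B) [GradedRing 𝒜]
    -- deg is the degree function determined by the grading 𝒜
    (deg : B → WithBot G) (hdegfn : IsDegreeFunction deg)
    (hdeg : ∀ x : B, x ≠ 0 → ∀ i : G,
      (deg x ≤ ↑i ↔ ∀ j : G, i < j → (DirectSum.decompose 𝒜 x j : B) = 0))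
    -- A is a subring of B₀
    (A : Subring B) (hA : (A : Set B) ⊆ (𝒜 0 : Set B))
    -- trdeg of B₀ over A is finite, and B is finitely generated over B₀
    (htrdeg : ∃ (m : ℕ) (z : Fin m → B), (∀ j, z j ∈ 𝒜 0) ∧
      ∀ b ∈ 𝒜 0, ∃ p : Polynomial B, p ≠ 0 ∧
        (∀ i : ℕ, p.coeff i ∈ Subring.closure ((A : Set B) ∪ Set.range z)) ∧
        Polynomial.eval b p = 0)
    (hfg : ∃ (n : ℕ) (x : Fin n → B),
      Subring.closure ((𝒜 0 : Set B) ∪ Set.range x) = ⊤) :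
    -- deg is tame over A:
    (∀ D : B → B, (∀ u v : B, D (u + v) = D u + D v) →
      (∀ u v : B, D (u * v) = u * D v + v * D u) →
      (∀ a ∈ A, D a = 0) → DegreeDefinedAt deg D) ∧
    -- more precisely:
    (∀ (m n : ℕ) (z : Fin m → B) (x : Fin n → B),
      (∀ j, z j ∈ 𝒜 0) → (∀ i : Fin n, ∃ d : G, x i ∈ 𝒜 d) →
      (∀ b ∈ 𝒜 0, ∃ p : Polynomial B, p ≠ 0 ∧
        (∀ i : ℕ, p.coeff i ∈ Subring.closure ((A : Set B) ∪ Set.range z)) ∧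
        Polynomial.eval b p = 0) →
      Subring.closure ((𝒜 0 : Set B) ∪ Set.range x) = ⊤ →
      ∀ D : B → B, (∀ u v : B, D (u + v) = D u + D v) →
        (∀ u v : B, D (u * v) = u * D v + v * D u) →
        (∀ a ∈ A, D a = 0) →
        IsGreatest (degDeltaSet deg D)
          ((Finset.univ.sup fun j => degDelta deg D (z j)) ⊔
            (Finset.univ.sup fun i => degDelta deg D (x i)))) := by
  classical
  obtain ⟨degbot, degmul, degadd⟩ := hdegfn
  have deg0 : deg 0 = ⊥ := (degbot 0).2 rfl
  have hD0 : ∀ D : B → B, (∀ u v : B, D (u + v) = D u + D v) → D 0 = 0 := by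
    intro D hDadd
    have h := hDadd 0 0
    rw [add_zero] at h
    exact add_left_cancel (h.symm.trans (add_zero (D 0)).symm)
  have hD1 : ∀ D : B → B, (∀ u v : B, D (u * v) = u * D v + v * D u) →
      D 1 = 0 := by
    intro D hDmul
    have h := hDmul 1 1
    simp only [mul_one, one_mul] at h
    exact add_left_cancel (h.symm.trans (add_zero (D 1)).symm)
  have deg_of_mem_le : ∀ {i : G} {x : B}, x ∈ 𝒜 i → deg x ≤ (i : WithBot G) := by
    intro i x hx
    by_cases h : x = 0
    · simp [h, deg0]
    · exact (hdeg x h i).2 fun j hj =>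
        DirectSum.decompose_of_mem_ne 𝒜 hx (ne_of_lt hj)
  have deg_of_mem : ∀ {i : G} {x : B}, x ∈ 𝒜 i → x ≠ 0 →
      deg x = (i : WithBot G) := by
    intro i x hx h0
    refine le_antisymm (deg_of_mem_le hx) ?_
    by_contra hlt
    push_neg at hlt
    obtain ⟨g, hg⟩ : ∃ g : G, deg x = ↑g := by
      obtain ⟨g, hg⟩ := WithBot.ne_bot_iff_exists.mp (fun h => h0 ((degbot x).1 h))
      exact ⟨g, hg.symm⟩
    rw [hg] at hlt
    have := (hdeg x h0 g).1 (le_of_eq hg) i (WithBot.coe_lt_coe.mp hlt)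
    rw [DirectSum.decompose_of_mem_same 𝒜 hx] at this
    exact h0 this
  have delta0 : ∀ D : B → B, (∀ u v : B, D (u + v) = D u + D v) →
      degDelta deg D 0 = ⊥ := by
    intro D hDadd
    rw [degDelta, hD0 D hDadd, deg0]
    rfl
  have delta1 : ∀ D : B → B, (∀ u v : B, D (u * v) = u * D v + v * D u) →
      degDelta deg D 1 = ⊥ := by
    intro D hDmul
    rw [degDelta, hD1 D hDmul, deg0]
    rfl
  have delta_conv : ∀ (D : B → B), (∀ u v : B, D (u + v) = D u + D v) →
      ∀ (b : B) (m : WithBot G), degDelta deg D b ≤ m →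
        deg (D b) ≤ m + deg b := by
    intro D hDadd b m hm
    by_cases hb : b = 0
    · rw [hb, hD0 D hDadd, deg0]
      exact bot_le
    · exact (deltaLe_iff deg degbot D hb m).1 hm
  have attain : ∀ D : B → B, (∀ u v : B, D (u + v) = D u + D v) →
      (∀ u v : B, D (u * v) = u * D v + v * D u) →
      ∀ F : Finset B, F.sup (degDelta deg D) ∈ degDeltaSet deg D := by
    intro D hDadd hDmul F
    by_cases hbot : F.sup (degDelta deg D) = ⊥
    · exact ⟨1, one_ne_zero, (delta1 D hDmul).trans hbot.symm⟩
    · have hne : F.Nonempty := by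
        rw [Finset.nonempty_iff_ne_empty]
        intro h
        exact hbot (by rw [h, Finset.sup_empty])
      obtain ⟨b, hbF, hbv⟩ := Finset.exists_mem_eq_sup F hne (degDelta deg D)
      refine ⟨b, ?_, hbv.symm⟩
      intro h0
      rw [h0] at hbv
      exact hbot (hbv.trans (delta0 D hDadd))
  constructor
  · -- tameness
    intro D hDadd hDmul hDA
    obtain ⟨m, z, hz, halg⟩ := htrdeg
    obtain ⟨n, x, hxgen⟩ := hfg
    set X : Set B :=
      {y | ∃ (i : Fin n) (d : G), y = ((DirectSum.decompose 𝒜 (x i) d : 𝒜 d) : B)}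
      with hXdef
    have hXhom : ∀ y ∈ X, ∃ d, y ∈ 𝒜 d := by
      rintro y ⟨i, d, rfl⟩
      exact ⟨d, SetLike.coe_mem _⟩
    have hgenX : Subring.closure ((𝒜 0 : Set B) ∪ X) = ⊤ := by
      rw [eq_top_iff, ← hxgen]
      refine Subring.closure_le.2 ?_
      rintro y (hy | ⟨i, rfl⟩)
      · exact Subring.subset_closure (Or.inl hy)
      · rw [← DirectSum.sum_support_decompose 𝒜 (x i)]
        exact sum_mem fun d _ => Subring.subset_closure (Or.inr ⟨i, d, rfl⟩)
    set F : Finset B := (Finset.univ.image z) ∪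
      Finset.univ.biUnion (fun i : Fin n =>
        (DirectSum.decompose 𝒜 (x i)).support.image fun d =>
          ((DirectSum.decompose 𝒜 (x i) d : 𝒜 d) : B)) with hFdef
    set M : WithBot G := F.sup (degDelta deg D) with hMdef
    refine ⟨M, attain D hDadd hDmul F, ?_⟩
    rintro w ⟨b, hb0, rfl⟩
    have core := coreBound 𝒜 deg degbot degmul degadd hdeg A hA
      (Set.range z) X
      (by rintro _ ⟨j, rfl⟩; exact hz j) hXhom halg hgenX
      D hDadd hDmul hDA M
      (by
        rintro _ ⟨j, rfl⟩
        have hδ : degDelta deg D (z j) ≤ M :=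
          Finset.le_sup (Finset.mem_union_left _
            (Finset.mem_image.2 ⟨j, Finset.mem_univ j, rfl⟩))
        by_cases h0 : z j = 0
        · rw [h0, hD0 D hDadd, deg0]
          exact bot_le
        · have := delta_conv D hDadd (z j) M hδ
          rwa [deg_of_mem (hz j) h0, WithBot.coe_zero, add_zero] at this)
      (by
        rintro _ ⟨i, d, rfl⟩
        by_cases hy : ((DirectSum.decompose 𝒜 (x i) d : 𝒜 d) : B) = 0
        · rw [hy, hD0 D hDadd, deg0]
          exact bot_le
        · have hd : d ∈ (DirectSum.decompose 𝒜 (x i)).support :=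
            DFinsupp.mem_support_iff.2 (fun h => hy (by rw [h]; rfl))
          have hmem : ((DirectSum.decompose 𝒜 (x i) d : 𝒜 d) : B) ∈ F :=
            Finset.mem_union_right _ (Finset.mem_biUnion.2
              ⟨i, Finset.mem_univ i, Finset.mem_image.2 ⟨d, hd, rfl⟩⟩)
          exact delta_conv D hDadd _ M (Finset.le_sup hmem))
    exact (deltaLe_iff deg degbot D hb0 M).2 (core b)
  · -- the precise greatest value
    intro m n z x hz hx halg hgen D hDadd hDmul hDA
    set v : WithBot G := (Finset.univ.sup fun j => degDelta deg D (z j)) ⊔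
      (Finset.univ.sup fun i => degDelta deg D (x i)) with hvdef
    have hvF : v = ((Finset.univ.image z) ∪ (Finset.univ.image x)).sup
        (degDelta deg D) := by
      rw [Finset.sup_union, Finset.sup_image, Finset.sup_image]
      rfl
    constructor
    · rw [hvF]
      exact attain D hDadd hDmul _
    · rintro w ⟨b, hb0, rfl⟩
      have core := coreBound 𝒜 deg degbot degmul degadd hdeg A hA
        (Set.range z) (Set.range x)
        (by rintro _ ⟨j, rfl⟩; exact hz j)
        (by rintro _ ⟨i, rfl⟩; exact hx i) halg hgen
        D hDadd hDmul hDA v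
        (by
          rintro _ ⟨j, rfl⟩
          have hδ : degDelta deg D (z j) ≤ v := by
            rw [hvdef]
            have h1 : degDelta deg D (z j) ≤
                Finset.univ.sup fun j => degDelta deg D (z j) :=
              Finset.le_sup (f := fun j => degDelta deg D (z j))
                (Finset.mem_univ j)
            exact h1.trans le_sup_left
          by_cases h0 : z j = 0
          · rw [h0, hD0 D hDadd, deg0]
            exact bot_le
          · have := delta_conv D hDadd (z j) v hδ
            rwa [deg_of_mem (hz j) h0, WithBot.coe_zero, add_zero] at this)
        (by
          rintro _ ⟨i, rfl⟩
          refine delta_conv D hDadd (x i) v ?_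
          rw [hvdef]
          have h1 : degDelta deg D (x i) ≤
              Finset.univ.sup fun i => degDelta deg D (x i) :=
            Finset.le_sup (f := fun i => degDelta deg D (x i))
              (Finset.mem_univ i)
          exact h1.trans le_sup_right)
      exact (deltaLe_iff deg degbot D hb0 v).2 (core b)
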